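/- Every well-formed configuration of the source language is either (1) a final configuration (the current expression is exit, or it is a value with empty continuation and empty call stack), or (2) reduces in one step to a well-formed configuration, or (3) is a stuck configuration of one of two forms: an out-of-bounds buffer read (C, s, σ, b[□]::K, i) with s[C,b,i] undefined, or an out-of-bounds buffer write (C, s, σ, b[i]:=□::K, i') with s[C,b,i] undefined. -/

import Mathlib

/- STATEMENT 1: Partial type safety for the source language: an imperative language
with components, procedures and buffers, with a continuation-based small-step
semantics. -/

namespace Src

inductive Op where
  | seq | add | sub | mul | eq | le

def Op.denote : Op → ℤ → ℤ → ℤ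
  | .seq, _, j => j
  | .add, i, j => i + j
  | .sub, i, j => i - j
  | .mul, i, j => i * j
  | .eq, i, j => if i = j then 1 else 0
  | .le, i, j => if i ≤ j then 1 else 0

/-- Expressions: values, binary operations, conditionals, buffer reads/writes,
cross-component procedure calls `C.P(e)` and `exit`. -/
inductive Expr where
  | val : ℤ → Expr
  | binop : Op → Expr → Expr → Expr
  | ite : Expr → Expr → Expr → Expr
  | read : ℕ → Expr → Expr                 -- b[e]
  | write : ℕ → Expr → Expr → Expr         -- b[e1] := e2
  | call : ℕ → ℕ → Expr → Expr             -- C.P(e)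
  | exit : Expr

/-- Flat evaluation contexts E. -/
inductive FlatCtx where
  | binopL : Op → Expr → FlatCtx           -- □ ⊗ e2
  | binopR : Op → ℤ → FlatCtx              -- i1 ⊗ □
  | iteC : Expr → Expr → FlatCtx           -- if □ then e1 else e2
  | readB : ℕ → FlatCtx                    -- b[□]
  | writeL : ℕ → Expr → FlatCtx            -- b[□] := e2
  | writeR : ℕ → ℤ → FlatCtx               -- b[i1] := □
  | callC : ℕ → ℕ → FlatCtx                -- C.P(□)

/-- Continuations are lists of flat evaluation contexts. -/
abbrev Cont := List FlatCtx

/-- The global state maps a component and a buffer id to an (optional) buffer. -/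
abbrev State := ℕ → ℕ → Option (List ℤ)

/-- Call stack: saved component, saved argument value, saved continuation. -/
abbrev Stack := List (ℕ × ℤ × Cont)

/-- `s[C,b,i]`: defined iff buffer `b` of component `C` exists and `i` is in bounds. -/
def getBuf (s : State) (C b : ℕ) (i : ℤ) : Option ℤ :=
  (s C b).bind fun l =>
    if h : 0 ≤ i ∧ i.toNat < l.length then some (l.get ⟨i.toNat, h.2⟩) else none

def setBuf (s : State) (C b : ℕ) (i v : ℤ) : State :=
  fun C' b' =>
    if C' = C ∧ b' = b then (s C b).map (fun l => l.set i.toNat v) else s C' b'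

/-- Configurations (C, s, σ, K, e). -/
structure Cfg where
  C : ℕ
  s : State
  σ : Stack
  K : Cont
  e : Expr

/-- Small-step semantics, parameterized by the procedure bodies Δ. -/
inductive Step (Δ : ℕ → ℕ → Option Expr) : Cfg → Cfg → Prop where
  | binop_push : ∀ C s σ K op e1 e2,
      Step Δ ⟨C,s,σ,K,.binop op e1 e2⟩ ⟨C,s,σ,.binopL op e2 :: K, e1⟩
  | binop_swap : ∀ C s σ K op e2 i,
      Step Δ ⟨C,s,σ,.binopL op e2 :: K,.val i⟩ ⟨C,s,σ,.binopR op i :: K, e2⟩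
  | binop_done : ∀ C s σ K op i1 i2,
      Step Δ ⟨C,s,σ,.binopR op i1 :: K,.val i2⟩ ⟨C,s,σ,K,.val (op.denote i1 i2)⟩
  | ite_push : ∀ C s σ K e e1 e2,
      Step Δ ⟨C,s,σ,K,.ite e e1 e2⟩ ⟨C,s,σ,.iteC e1 e2 :: K, e⟩
  | ite_true : ∀ C s σ K e1 e2 (i : ℤ), i ≠ 0 →
      Step Δ ⟨C,s,σ,.iteC e1 e2 :: K,.val i⟩ ⟨C,s,σ,K,e1⟩
  | ite_false : ∀ C s σ K e1 e2,
      Step Δ ⟨C,s,σ,.iteC e1 e2 :: K,.val 0⟩ ⟨C,s,σ,K,e2⟩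
  | read_push : ∀ C s σ K b e,
      Step Δ ⟨C,s,σ,K,.read b e⟩ ⟨C,s,σ,.readB b :: K, e⟩
  | read_done : ∀ C s σ K b i v, getBuf s C b i = some v →
      Step Δ ⟨C,s,σ,.readB b :: K,.val i⟩ ⟨C,s,σ,K,.val v⟩
  | write_push : ∀ C s σ K b e1 e2,
      Step Δ ⟨C,s,σ,K,.write b e1 e2⟩ ⟨C,s,σ,.writeL b e2 :: K, e1⟩
  | write_swap : ∀ C s σ K b e2 i1,
      Step Δ ⟨C,s,σ,.writeL b e2 :: K,.val i1⟩ ⟨C,s,σ,.writeR b i1 :: K, e2⟩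
  | write_done : ∀ C s σ K b i1 i2 v, getBuf s C b i1 = some v →
      Step Δ ⟨C,s,σ,.writeR b i1 :: K,.val i2⟩ ⟨C, setBuf s C b i1 i2, σ, K,.val i2⟩
  | call_push : ∀ C s σ K C' P' e,
      Step Δ ⟨C,s,σ,K,.call C' P' e⟩ ⟨C,s,σ,.callC C' P' :: K, e⟩
  | call_do : ∀ C s σ K C' P' i body iarg,
      Δ C' P' = some body → getBuf s C 0 0 = some iarg →
      Step Δ ⟨C,s,σ,.callC C' P' :: K,.val i⟩
             ⟨C', setBuf s C' 0 0 i, (C, iarg, K) :: σ, [], body⟩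
  | ret : ∀ C s σ K' C' i' i,
      Step Δ ⟨C,s,(C',i',K') :: σ,[],.val i⟩ ⟨C', setBuf s C' 0 0 i', σ, K',.val i⟩

/-- Final configurations: the expression is `exit`, or it is a value with empty
continuation and empty call stack. -/
def Final (cfg : Cfg) : Prop :=
  cfg.e = .exit ∨ (∃ i, cfg.e = .val i ∧ cfg.K = [] ∧ cfg.σ = [])

/-- Buffer `b` of component `C` is defined. -/
def bufDefined (s : State) (C b : ℕ) : Prop := (s C b).isSome
/-- The argument cell (first cell of the first buffer) of component `C` is defined. -/
def argDefined (s : State) (C : ℕ) : Prop := ∃ l, s C 0 = some l ∧ 0 < l.length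

/-- Well-formed expressions: all used buffers are defined, all called procedures
of imported components are defined (public), argument cells of caller and callee
components exist. -/
def wfExpr (Δ : ℕ → ℕ → Option Expr) (s : State) (C : ℕ) : Expr → Prop
  | .val _ => True
  | .binop _ e1 e2 => wfExpr Δ s C e1 ∧ wfExpr Δ s C e2
  | .ite e e1 e2 => wfExpr Δ s C e ∧ wfExpr Δ s C e1 ∧ wfExpr Δ s C e2
  | .read b e => bufDefined s C b ∧ wfExpr Δ s C e
  | .write b e1 e2 => bufDefined s C b ∧ wfExpr Δ s C e1 ∧ wfExpr Δ s C e2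
  | .call C' P' e =>
      (Δ C' P').isSome ∧ argDefined s C' ∧ argDefined s C ∧ wfExpr Δ s C e
  | .exit => True

def wfFlat (Δ : ℕ → ℕ → Option Expr) (s : State) (C : ℕ) : FlatCtx → Prop
  | .binopL _ e => wfExpr Δ s C e
  | .binopR _ _ => True
  | .iteC e1 e2 => wfExpr Δ s C e1 ∧ wfExpr Δ s C e2
  | .readB b => bufDefined s C b
  | .writeL b e2 => bufDefined s C b ∧ wfExpr Δ s C e2
  | .writeR b _ => bufDefined s C b
  | .callC C' P' => (Δ C' P').isSome ∧ argDefined s C' ∧ argDefined s C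

def wfCont (Δ : ℕ → ℕ → Option Expr) (s : State) (C : ℕ) (K : Cont) : Prop :=
  ∀ E ∈ K, wfFlat Δ s C E

def wfStack (Δ : ℕ → ℕ → Option Expr) (s : State) (σ : Stack) : Prop :=
  ∀ fr ∈ σ, wfCont Δ s fr.1 fr.2.2 ∧ argDefined s fr.1

def wfBodies (Δ : ℕ → ℕ → Option Expr) (s : State) : Prop :=
  ∀ C P body, Δ C P = some body → wfExpr Δ s C body

/-- Well-formed configurations (component names are unique by construction, since
components are indexed by their names). -/
def WfCfg (Δ : ℕ → ℕ → Option Expr) (cfg : Cfg) : Prop :=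
  wfExpr Δ cfg.s cfg.C cfg.e ∧ wfCont Δ cfg.s cfg.C cfg.K ∧
  wfStack Δ cfg.s cfg.σ ∧ wfBodies Δ cfg.s ∧ argDefined cfg.s cfg.C

lemma bufDefined_setBuf (s : State) (C b : ℕ) (i v : ℤ) (C' b' : ℕ) :
    bufDefined (setBuf s C b i v) C' b' ↔ bufDefined s C' b' := by
  unfold bufDefined setBuf
  split
  · next h => simp [h.1, h.2, Option.isSome_map]
  · rfl

lemma argDefined_setBuf (s : State) (C b : ℕ) (i v : ℤ) (C' : ℕ) :
    argDefined (setBuf s C b i v) C' ↔ argDefined s C' := by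
  unfold argDefined setBuf
  split
  · next h =>
    obtain ⟨h1, h2⟩ := h
    subst h1 h2
    constructor
    · rintro ⟨l, hl, hlen⟩
      rcases hm : s C' 0 with _ | l0
      · simp [hm] at hl
      · refine ⟨l0, rfl, ?_⟩
        simp [hm] at hl
        simpa [← hl, List.length_set] using hlen
    · rintro ⟨l, hl, hlen⟩
      exact ⟨l.set i.toNat v, by simp [hl], by simpa [List.length_set] using hlen⟩
  · rfl

lemma wfExpr_setBuf (Δ : ℕ → ℕ → Option Expr) (s : State) (C b : ℕ) (i v : ℤ)
    (C0 : ℕ) (e : Expr) : wfExpr Δ (setBuf s C b i v) C0 e ↔ wfExpr Δ s C0 e := by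
  induction e generalizing C0 <;>
    simp_all [wfExpr, bufDefined_setBuf, argDefined_setBuf]

lemma wfFlat_setBuf (Δ : ℕ → ℕ → Option Expr) (s : State) (C b : ℕ) (i v : ℤ)
    (C0 : ℕ) (E : FlatCtx) : wfFlat Δ (setBuf s C b i v) C0 E ↔ wfFlat Δ s C0 E := by
  cases E <;> simp [wfFlat, bufDefined_setBuf, argDefined_setBuf, wfExpr_setBuf]

lemma wfCont_setBuf (Δ : ℕ → ℕ → Option Expr) (s : State) (C b : ℕ) (i v : ℤ)
    (C0 : ℕ) (K : Cont) : wfCont Δ (setBuf s C b i v) C0 K ↔ wfCont Δ s C0 K := by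
  unfold wfCont; simp [wfFlat_setBuf]

lemma wfStack_setBuf (Δ : ℕ → ℕ → Option Expr) (s : State) (C b : ℕ) (i v : ℤ)
    (σ : Stack) : wfStack Δ (setBuf s C b i v) σ ↔ wfStack Δ s σ := by
  unfold wfStack; simp [wfCont_setBuf, argDefined_setBuf]

lemma wfBodies_setBuf (Δ : ℕ → ℕ → Option Expr) (s : State) (C b : ℕ) (i v : ℤ) :
    wfBodies Δ (setBuf s C b i v) ↔ wfBodies Δ s := by
  unfold wfBodies; simp [wfExpr_setBuf]

lemma getBuf_arg (s : State) (C : ℕ) (h : argDefined s C) :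
    ∃ v, getBuf s C 0 0 = some v := by
  obtain ⟨l, hl, hlen⟩ := h
  refine ⟨l.get ⟨0, by simpa using hlen⟩, ?_⟩
  simp [getBuf, hl]
  exact hlen

/-- Partial type safety: every well-formed configuration is (1) final, or
(2) reduces in one step to a well-formed configuration, or (3) is stuck at an
out-of-bounds buffer read `(C,s,σ,b[□]::K,i)` or an out-of-bounds buffer write
`(C,s,σ,b[i]:=□::K,i')` with `s[C,b,i]` undefined. -/
theorem partial_type_safety (Δ : ℕ → ℕ → Option Expr) (cfg : Cfg)
    (hwf : WfCfg Δ cfg) :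
    Final cfg
    ∨ (∃ cfg', Step Δ cfg cfg' ∧ WfCfg Δ cfg')
    ∨ (∃ C s σ b K i, cfg = ⟨C, s, σ, .readB b :: K, .val i⟩ ∧ getBuf s C b i = none)
    ∨ (∃ C s σ b K i i', cfg = ⟨C, s, σ, .writeR b i :: K, .val i'⟩ ∧
        getBuf s C b i = none) := by
  obtain ⟨C, s, σ, K, e⟩ := cfg
  obtain ⟨he, hK, hσ, hΔ, harg⟩ := hwf
  cases e with
  | exit => exact Or.inl (Or.inl rfl)
  | binop op e1 e2 =>
    refine Or.inr (Or.inl ⟨_, .binop_push C s σ K op e1 e2, ?_, ?_, hσ, hΔ, harg⟩)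
    · exact he.1
    · intro E hE
      rcases List.mem_cons.mp hE with rfl | hE
      · exact he.2
      · exact hK E hE
  | ite e e1 e2 =>
    refine Or.inr (Or.inl ⟨_, .ite_push C s σ K e e1 e2, he.1, ?_, hσ, hΔ, harg⟩)
    intro E hE
    rcases List.mem_cons.mp hE with rfl | hE
    · exact ⟨he.2.1, he.2.2⟩
    · exact hK E hE
  | read b e =>
    refine Or.inr (Or.inl ⟨_, .read_push C s σ K b e, he.2, ?_, hσ, hΔ, harg⟩)
    intro E hE
    rcases List.mem_cons.mp hE with rfl | hE
    · exact he.1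
    · exact hK E hE
  | write b e1 e2 =>
    refine Or.inr (Or.inl ⟨_, .write_push C s σ K b e1 e2, he.2.1, ?_, hσ, hΔ, harg⟩)
    intro E hE
    rcases List.mem_cons.mp hE with rfl | hE
    · exact ⟨he.1, he.2.2⟩
    · exact hK E hE
  | call C' P' e =>
    refine Or.inr (Or.inl ⟨_, .call_push C s σ K C' P' e, he.2.2.2, ?_, hσ, hΔ, harg⟩)
    intro E hE
    rcases List.mem_cons.mp hE with rfl | hE
    · exact ⟨he.1, he.2.1, he.2.2.1⟩
    · exact hK E hE
  | val i =>
    cases K with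
    | nil =>
      cases σ with
      | nil => exact Or.inl (Or.inr ⟨i, rfl, rfl, rfl⟩)
      | cons fr σ' =>
        obtain ⟨C', i', K'⟩ := fr
        refine Or.inr (Or.inl ⟨_, .ret C s σ' K' C' i' i, trivial, ?_, ?_, ?_, ?_⟩)
        · rw [wfCont_setBuf]
          exact (hσ _ (List.mem_cons_self)).1
        · rw [wfStack_setBuf]
          intro fr hfr; exact hσ fr (List.mem_cons_of_mem _ hfr)
        · rw [wfBodies_setBuf]; exact hΔ
        · rw [argDefined_setBuf]
          exact (hσ _ (List.mem_cons_self)).2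
    | cons E K =>
      have hE := hK E (List.mem_cons_self)
      have hKtail : wfCont Δ s C K := fun E' hE' => hK E' (List.mem_cons_of_mem _ hE')
      cases E with
      | binopL op e2 =>
        refine Or.inr (Or.inl ⟨_, .binop_swap C s σ K op e2 i, hE, ?_, hσ, hΔ, harg⟩)
        intro E' hE'
        rcases List.mem_cons.mp hE' with rfl | h
        · trivial
        · exact hKtail E' h
      | binopR op i1 =>
        exact Or.inr (Or.inl ⟨_, .binop_done C s σ K op i1 i, trivial, hKtail, hσ, hΔ, harg⟩)
      | iteC e1 e2 =>
        by_cases hi : i = 0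
        · subst hi
          exact Or.inr (Or.inl ⟨_, .ite_false C s σ K e1 e2, hE.2, hKtail, hσ, hΔ, harg⟩)
        · exact Or.inr (Or.inl ⟨_, .ite_true C s σ K e1 e2 i hi, hE.1, hKtail, hσ, hΔ, harg⟩)
      | readB b =>
        rcases hb : getBuf s C b i with _ | v
        · exact Or.inr (Or.inr (Or.inl ⟨C, s, σ, b, K, i, rfl, hb⟩))
        · exact Or.inr (Or.inl ⟨_, .read_done C s σ K b i v hb, trivial, hKtail, hσ, hΔ, harg⟩)
      | writeL b e2 =>
        refine Or.inr (Or.inl ⟨_, .write_swap C s σ K b e2 i, hE.2, ?_, hσ, hΔ, harg⟩)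
        intro E' hE'
        rcases List.mem_cons.mp hE' with rfl | h
        · exact hE.1
        · exact hKtail E' h
      | writeR b i1 =>
        rcases hb : getBuf s C b i1 with _ | v
        · exact Or.inr (Or.inr (Or.inr ⟨C, s, σ, b, K, i1, i, rfl, hb⟩))
        · refine Or.inr (Or.inl ⟨_, .write_done C s σ K b i1 i v hb, trivial, ?_, ?_, ?_, ?_⟩)
          · rw [wfCont_setBuf]; exact hKtail
          · rw [wfStack_setBuf]; exact hσ
          · rw [wfBodies_setBuf]; exact hΔ
          · rw [argDefined_setBuf]; exact harg
      | callC C' P' =>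
        obtain ⟨hΔ', harg', hargC⟩ := hE
        obtain ⟨body, hbody⟩ := Option.isSome_iff_exists.mp hΔ'
        obtain ⟨iarg, hiarg⟩ := getBuf_arg s C hargC
        refine Or.inr (Or.inl ⟨_, .call_do C s σ K C' P' i body iarg hbody hiarg,
          ?_, ?_, ?_, ?_, ?_⟩)
        · rw [wfExpr_setBuf]; exact hΔ _ _ _ hbody
        · intro E' hE'; exact absurd hE' List.not_mem_nil
        · rw [wfStack_setBuf]
          intro fr hfr
          rcases List.mem_cons.mp hfr with rfl | h
          · exact ⟨hKtail, hargC⟩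
          · exact hσ fr h
        · rw [wfBodies_setBuf]; exact hΔ
        · rw [argDefined_setBuf]; exact harg'

end Src
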